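/- arXiv:2512.25022 — 3 statements merged into one kernel-verified Lean document; each statement's English description precedes it below -/
import Mathlib

section
/- Let N be a free ℤ-module of finite rank n and f : N → N a module endomorphism with f ∘ f = id. Then ker(id − f) is a direct summand of N, and the induced map of f on the quotient N / ker(id − f) is −id. -/
/-- Auxiliary lemma: over a PID, the fixed submodule of an involution of a finitely
generated torsion-free module is a direct summand. Stated over a general ring to
avoid `ℤ`-scalar-action instance diamonds. -/
lemma stmt_2_aux (R : Type*) [CommRing R] [IsDomain R] [IsPrincipalIdealRing R]
    (N : Type*) [AddCommGroup N] [Module R N] [Module.Finite R N]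
    [NoZeroSMulDivisors R N] (f : N →ₗ[R] N) (hff : ∀ x : N, f (f x) = x) :
    ∃ q : Submodule R N, IsCompl (LinearMap.ker (LinearMap.id - f)) q := by
  set K := LinearMap.ker (LinearMap.id - f) with hK
  have hmem : ∀ x : N, x ∈ K ↔ f x = x := by
    intro x
    rw [hK, LinearMap.mem_ker, LinearMap.sub_apply, LinearMap.id_apply, sub_eq_zero, eq_comm]
  clear_value K
  haveI : NoZeroSMulDivisors R (N ⧸ K) := by
    constructor
    intro c x h
    by_cases hc : c = 0
    · exact Or.inl hc
    · right
      obtain ⟨y, rfl⟩ := Submodule.Quotient.mk_surjective K x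
      rw [← Submodule.Quotient.mk_smul, Submodule.Quotient.mk_eq_zero] at h
      have h1 : f (c • y) = c • y := (hmem _).1 h
      have h2 : c • (f y - y) = 0 := by
        rw [smul_sub, ← f.map_smul, h1, sub_self]
      have hy : f y = y :=
        sub_eq_zero.mp ((smul_eq_zero.mp h2).resolve_left hc)
      exact (Submodule.Quotient.mk_eq_zero K).2 ((hmem y).2 hy)
  haveI : Module.Finite R (N ⧸ K) :=
    Module.Finite.of_surjective K.mkQ K.mkQ_surjective
  haveI : Module.Free R (N ⧸ K) := Module.free_of_finite_type_torsion_free'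
  obtain ⟨g, hg⟩ := Module.projective_lifting_property K.mkQ LinearMap.id
    K.mkQ_surjective
  have hgm : ∀ x : N, x - g (K.mkQ x) ∈ K := by
    intro x
    have h1 := congrArg (· (K.mkQ x)) hg
    simp only [LinearMap.comp_apply, LinearMap.id_apply] at h1
    rw [← Submodule.Quotient.mk_eq_zero K, Submodule.Quotient.mk_sub, sub_eq_zero]
    exact h1.symm
  let π : N →ₗ[R] K := (LinearMap.id - g ∘ₗ K.mkQ).codRestrict K (fun x => by
    simpa using hgm x)
  refine ⟨LinearMap.ker π, LinearMap.isCompl_of_proj (f := π) ?_⟩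
  intro x
  ext
  have h0 : K.mkQ (x : N) = 0 := (Submodule.Quotient.mk_eq_zero K).2 x.2
  simp [π, LinearMap.codRestrict_apply, h0]

/-- For a `ℤ`-linear involution `f` of a finite free `ℤ`-module `N`, the kernel of
`id − f` (the fixed submodule) is a direct summand of `N`, and the map induced by
`f` on the quotient `N ⧸ ker(id − f)` is `−id`. -/
theorem stmt_2 (N : Type*) [AddCommGroup N] [Module ℤ N]
    [Module.Free ℤ N] [Module.Finite ℤ N]
    (f : N →ₗ[ℤ] N) (hf : f ∘ₗ f = LinearMap.id) :
    (∃ q : Submodule ℤ N, IsCompl (LinearMap.ker (LinearMap.id - f)) q) ∧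
    (∀ x : N,
      (Submodule.Quotient.mk (f x) :
        N ⧸ LinearMap.ker (LinearMap.id - f)) = -Submodule.Quotient.mk x) := by
  have hff : ∀ x : N, f (f x) = x := fun x => congrArg (· x) hf
  haveI : @NoZeroSMulDivisors ℤ N _ _ (Module.toDistribMulAction (R := ℤ) (M := N)).toSMul :=
    @NoZeroSMulDivisors.mk ℤ N _ _ (Module.toDistribMulAction (R := ℤ) (M := N)).toSMul (fun {c x} h => by
      by_cases hc : c = 0
      · exact Or.inl hc
      · exact Or.inr (Module.IsTorsionFree.isSMulRegular (M := N) (IsRegular.of_ne_zero hc)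
          (h.trans (smul_zero (A := N) c).symm)))
  refine ⟨stmt_2_aux ℤ N f hff, ?_⟩
  intro x
  rw [eq_comm, neg_eq_iff_add_eq_zero, ← Submodule.Quotient.mk_add,
    Submodule.Quotient.mk_eq_zero, LinearMap.mem_ker, LinearMap.sub_apply,
    LinearMap.id_apply, map_add, hff x]
  abel
end

section
/- Let N be a free ℤ-module of rank n and f a ℤ-linear involution on N whose fixed submodule ker(id − f) has rank d. Then there exists a basis (a₁, …, a_d, b₁, …, b_{n−d}) of N such that f(a_i) = a_i for all i, and f(b_i) = Σ_k h_{ki} a_k − b_i for all i, where each h_{ki} ∈ {0, 1}. -/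
/-- For a `ℤ`-linear involution `f` of a free `ℤ`-module of rank `n` whose fixed
submodule has rank `d`, there is a basis `(a₁,…,a_d,b₁,…,b_{n-d})` with
`f aᵢ = aᵢ` and `f bᵢ = ∑ₖ h_{ki} aₖ − bᵢ` where `h_{ki} ∈ {0,1}`. -/
theorem stmt_3 (N : Type*) [AddCommGroup N] [Module ℤ N]
    [Module.Free ℤ N] [Module.Finite ℤ N] (n d : ℕ)
    (hn : Module.finrank ℤ N = n)
    (f : N →ₗ[ℤ] N) (hf : f ∘ₗ f = LinearMap.id)
    (hd : Module.finrank ℤ (LinearMap.ker (LinearMap.id - f)) = d) :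
    ∃ (e : Module.Basis (Fin d ⊕ Fin (n - d)) ℤ N)
      (h : Matrix (Fin d) (Fin (n - d)) ℤ),
      (∀ k i, h k i = 0 ∨ h k i = 1) ∧
      (∀ i : Fin d, f (e (Sum.inl i)) = e (Sum.inl i)) ∧
      (∀ i : Fin (n - d),
        f (e (Sum.inr i)) = (∑ k : Fin d, h k i • e (Sum.inl k)) - e (Sum.inr i)) := by
  classical
  have hsub : ‹Module ℤ N› = AddCommGroup.toIntModule N :=
    AddCommGroup.uniqueIntModule.uniq _
  subst hsub
  set K := LinearMap.ker (LinearMap.id - f) with hKdef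
  have hff : ∀ x : N, f (f x) = x := by
    intro x
    have := congrArg (fun g : N →ₗ[ℤ] N => g x) hf
    simpa using this
  have hmemK : ∀ x : N, x ∈ K ↔ x - f x = 0 := by
    intro x
    simp [hKdef, LinearMap.mem_ker, LinearMap.sub_apply]
  have hfix : ∀ x : N, x ∈ K → f x = x := by
    intro x hx
    exact (sub_eq_zero.mp ((hmemK x).mp hx)).symm
  have hsum : ∀ x : N, x + f x ∈ K := by
    intro x
    rw [hmemK, map_add, hff]
    abel
  have hmk0 : ∀ y : N, K.mkQ y = 0 ↔ y ∈ K := by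
    intro y
    rw [Submodule.mkQ_apply, Submodule.Quotient.mk_eq_zero]
  -- the quotient is torsion-free, hence free
  haveI : NoZeroSMulDivisors ℤ (N ⧸ K) := by
    constructor
    intro c x hcx
    by_cases hc : c = 0
    · exact Or.inl hc
    · right
      obtain ⟨y, rfl⟩ := Submodule.mkQ_surjective K x
      have hmem : c • y ∈ K := by
        rw [← hmk0, LinearMap.map_smul]
        exact hcx
      have h1 : c • y - f (c • y) = 0 := (hmemK _).mp hmem
      have h2 : c • (y - f y) = 0 := by rw [smul_sub, ← LinearMap.map_smul]; exact h1
      have hy : y - f y = 0 := by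
        rcases smul_eq_zero.mp h2 with h | h
        · exact absurd h hc
        · exact h
      rw [hmk0]
      exact (hmemK y).mpr hy
  haveI : Module.Free ℤ (N ⧸ K) := Module.free_of_finite_type_torsion_free'
  -- any section of the quotient map yields an isomorphism K × (N ⧸ K) ≃ N
  have bijco : ∀ σ : (N ⧸ K) →ₗ[ℤ] N, K.mkQ ∘ₗ σ = LinearMap.id →
      Function.Bijective (LinearMap.coprod K.subtype σ) := by
    intro σ hσ
    have hσ' : ∀ q : N ⧸ K, K.mkQ (σ q) = q := fun q =>
      congrArg (fun g : (N ⧸ K) →ₗ[ℤ] (N ⧸ K) => g q) hσ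
    constructor
    · rintro ⟨k, q⟩ ⟨k', q'⟩ hkq
      simp only [LinearMap.coprod_apply, Submodule.coe_subtype] at hkq
      have h1 : K.mkQ ((k : N) + σ q) = K.mkQ ((k' : N) + σ q') := by rw [hkq]
      rw [map_add, map_add, hσ' q, hσ' q', (hmk0 _).mpr k.2, (hmk0 _).mpr k'.2,
        zero_add, zero_add] at h1
      subst h1
      have hk : (k : N) = k' := add_right_cancel hkq
      exact Prod.ext (Subtype.ext hk) rfl
    · intro x
      have hmem : x - σ (K.mkQ x) ∈ K := by
        rw [← hmk0, map_sub, hσ']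
        simp
      exact ⟨(⟨x - σ (K.mkQ x), hmem⟩, K.mkQ x), by simp [LinearMap.coprod_apply]⟩
  obtain ⟨s₀, hs₀⟩ := Module.projective_lifting_property K.mkQ
    (LinearMap.id : (N ⧸ K) →ₗ[ℤ] (N ⧸ K)) (Submodule.mkQ_surjective K)
  -- rank of the quotient
  have hQrank : Module.finrank ℤ (N ⧸ K) = n - d := by
    have e0 := LinearEquiv.ofBijective (LinearMap.coprod K.subtype s₀) (bijco s₀ hs₀)
    have h1 : Module.finrank ℤ (K × (N ⧸ K)) = Module.finrank ℤ N := e0.finrank_eq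
    rw [Module.finrank_prod, hd, hn] at h1
    omega
  -- bases of K and of the quotient
  have aK : Module.Basis (Fin d) ℤ K := (Module.finBasis ℤ K).reindex (finCongr hd)
  have bQ : Module.Basis (Fin (n - d)) ℤ (N ⧸ K) := (Module.finBasis ℤ (N ⧸ K)).reindex
    (finCongr hQrank)
  -- the fixed parts
  set c : Fin (n - d) → K := fun i => ⟨s₀ (bQ i) + f (s₀ (bQ i)), hsum _⟩ with hcdef
  have hc : ∀ i, (c i : N) = s₀ (bQ i) + f (s₀ (bQ i)) := fun i => rfl
  set m : Matrix (Fin d) (Fin (n - d)) ℤ := fun k i => aK.repr (c i) k with hm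
  -- corrected section
  set t : (N ⧸ K) →ₗ[ℤ] K := bQ.constr ℤ (fun i => ∑ k, (m k i / 2) • aK k) with ht
  set s : (N ⧸ K) →ₗ[ℤ] N := s₀ - K.subtype ∘ₗ t with hs
  have hssec : K.mkQ ∘ₗ s = LinearMap.id := by
    rw [hs]
    refine LinearMap.ext fun q => ?_
    simp only [LinearMap.sub_apply, LinearMap.comp_apply, map_sub, LinearMap.id_apply]
    rw [Submodule.subtype_apply, (hmk0 _).mpr (t q).2]
    have := congrArg (fun g : (N ⧸ K) →ₗ[ℤ] (N ⧸ K) => g q) hs₀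
    simpa using this
  set eqv := LinearEquiv.ofBijective (LinearMap.coprod K.subtype s) (bijco s hssec)
    with heqv
  set e : Module.Basis (Fin d ⊕ Fin (n - d)) ℤ N := (aK.prod bQ).map eqv with he
  have heinl : ∀ k, e (Sum.inl k) = (aK k : N) := by
    intro k
    rw [he, Module.Basis.map_apply]
    have h1 : (aK.prod bQ) (Sum.inl k) = (aK k, 0) := by ext <;> simp
    rw [h1, heqv, LinearEquiv.ofBijective_apply]
    simp
  have heinr : ∀ i, e (Sum.inr i) = s (bQ i) := by
    intro i
    rw [he, Module.Basis.map_apply]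
    have h1 : (aK.prod bQ) (Sum.inr i) = (0, bQ i) := by ext <;> simp
    rw [h1, heqv, LinearEquiv.ofBijective_apply]
    simp
  refine ⟨e, fun k i => m k i % 2, fun k i => Int.emod_two_eq_zero_or_one _, ?_, ?_⟩
  · intro i
    rw [heinl]
    exact hfix _ (aK i).2
  · intro i
    rw [heinr]
    have htb : t (bQ i) = ∑ k, (m k i / 2) • aK k := by
      rw [ht]; exact bQ.constr_basis ℤ _ i
    have hsb : s (bQ i) = s₀ (bQ i) - (t (bQ i) : N) := by
      rw [hs]; simp
    have hKeq : c i - (2 : ℤ) • t (bQ i) = ∑ k, (m k i % 2) • aK k := by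
      apply aK.ext_elem
      intro k
      rw [map_sub, map_smul, htb]
      have h1 : (aK.repr (∑ k', (m k' i / 2) • aK k')) k = m k i / 2 := by
        rw [aK.repr_sum_self]
      have h2 : (aK.repr (∑ k', (m k' i % 2) • aK k')) k = m k i % 2 := by
        rw [aK.repr_sum_self]
      rw [h2]
      have h3 : ∀ k', m k' i = aK.repr (c i) k' := fun _ => rfl
      simp only [Finsupp.sub_apply, Finsupp.smul_apply, h1, smul_eq_mul, h3] at h1 ⊢
      omega
    have hcoe : ((c i : N)) - (2 : ℤ) • (t (bQ i) : N) = ∑ k, (m k i % 2) • (aK k : N) := by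
      have := congrArg (Submodule.subtype K) hKeq
      simpa using this
    have hftb : f ((t (bQ i) : N)) = (t (bQ i) : N) := hfix _ (t (bQ i)).2
    have hfs0 : f (s₀ (bQ i)) = (c i : N) - s₀ (bQ i) := by
      rw [hc]; abel
    have hmain : f (s (bQ i)) = ((c i : N) - (2:ℤ) • (t (bQ i) : N)) - s (bQ i) := by
      rw [hsb, map_sub, hftb, hfs0, two_smul]
      abel
    rw [hmain, hcoe]
    congr 1
    refine Finset.sum_congr rfl fun k _ => ?_
    rw [heinl]
end

section
/- Every symmetric matrix over ℤ₂ is congruent to a block diagonal matrix of the form diag(I_k, G_m, 0), where I_k is a k × k identity block and G_m is a direct sum of m copies of the 2×2 block [[0,1],[1,0]]. -/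
set_option linter.unreachableTactic false
set_option linter.unusedTactic false
set_option maxHeartbeats 1000000

open Matrix

namespace Stmt9Aux

/-- The canonical form. -/
def canon (n k m : ℕ) : Matrix (Fin n) (Fin n) (ZMod 2) :=
  Matrix.of (fun i j : Fin n =>
    if i = j ∧ i.val < k then 1
    else if k ≤ i.val ∧ i.val < k + 2 * m ∧ k ≤ j.val ∧ j.val < k + 2 * m ∧
        (i.val - k) / 2 = (j.val - k) / 2 ∧ i ≠ j then 1
    else 0)

lemma canon_apply (n k m : ℕ) (i j : Fin n) :
    canon n k m i j =
      (if i.val = j.val ∧ i.val < k then 1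
      else if k ≤ i.val ∧ i.val < k + 2 * m ∧ k ≤ j.val ∧ j.val < k + 2 * m ∧
          (i.val - k) / 2 = (j.val - k) / 2 ∧ ¬ (i.val = j.val) then 1
      else 0 : ZMod 2) := by
  simp only [canon, of_apply, ne_eq, Fin.ext_iff]

lemma canon_zero (n : ℕ) : canon n 0 0 = 0 := by
  ext i j
  rw [canon_apply]
  simp only [Matrix.zero_apply]
  split_ifs <;> first | rfl | (exfalso; omega)

lemma mat_add_self {a b : Type*} (X : Matrix a b (ZMod 2)) : X + X = 0 := by
  ext i j
  simp only [Matrix.add_apply, Matrix.zero_apply]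
  exact CharTwo.add_self_eq_zero _

/-- prepend-one equivalence  -/
def e1 (l : ℕ) : Fin 1 ⊕ Fin l ≃ Fin (l + 1) where
  toFun := Sum.elim (fun _ => 0) Fin.succ
  invFun := fun i => Fin.cases (Sum.inl 0) (fun j => Sum.inr j) i
  left_inv := by
    rintro (a | j)
    · simp [Fin.fin_one_eq_zero a]
    · simp
  right_inv := fun i => by
    induction i using Fin.cases <;> simp

@[simp] lemma e1_inl_val (l : ℕ) (a : Fin 1) : ((e1 l) (Sum.inl a)).val = 0 := rfl
@[simp] lemma e1_inr_val (l : ℕ) (i : Fin l) : ((e1 l) (Sum.inr i)).val = i.val + 1 := rfl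

/-- prepend-two equivalence -/
def e2 (l : ℕ) : Fin 2 ⊕ Fin l ≃ Fin (l + 2) where
  toFun := Sum.elim (fun t => ⟨t.val, by omega⟩) (fun i => ⟨i.val + 2, by omega⟩)
  invFun := fun i => if h : i.val < 2 then Sum.inl ⟨i.val, h⟩ else Sum.inr ⟨i.val - 2, by omega⟩
  left_inv := by
    rintro (t | i)
    · simp [t.isLt]
    · simp
  right_inv := fun i => by
    by_cases h : i.val < 2
    · simp [h]
    · simp only [dif_neg h, Sum.elim_inr]
      exact Fin.ext (by simp; omega)

@[simp] lemma e2_inl_val (l : ℕ) (a : Fin 2) : ((e2 l) (Sum.inl a)).val = a.val := rfl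
@[simp] lemma e2_inr_val (l : ℕ) (i : Fin l) : ((e2 l) (Sum.inr i)).val = i.val + 2 := rfl

lemma submatrix_symm_eq {α : Type*} {n : ℕ} (e : α ≃ Fin n)
    (X : Matrix α α (ZMod 2)) (Y : Matrix (Fin n) (Fin n) (ZMod 2))
    (h : Y.submatrix e e = X) : X.submatrix e.symm e.symm = Y := by
  subst h
  rw [submatrix_submatrix, Equiv.self_comp_symm, submatrix_id_id]

/-- Transfer a congruence result along a reindexing equivalence. -/
lemma cong_sum {n : ℕ} {α : Type*} [Fintype α] [DecidableEq α] (e : α ≃ Fin n)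
    (A : Matrix (Fin n) (Fin n) (ZMod 2)) (N P : Matrix α α (ZMod 2))
    (hP : IsUnit P) (h : P * A.submatrix e e * Pᵀ = N) :
    ∃ Q : Matrix (Fin n) (Fin n) (ZMod 2),
      IsUnit Q ∧ Q * A * Qᵀ = N.submatrix e.symm e.symm := by
  refine ⟨P.submatrix e.symm e.symm, ?_, ?_⟩
  · rw [Matrix.isUnit_iff_isUnit_det, det_submatrix_equiv_self,
      ← Matrix.isUnit_iff_isUnit_det]
    exact hP
  · have hA : A = (A.submatrix e e).submatrix e.symm e.symm := by
      rw [submatrix_submatrix, Equiv.self_comp_symm, submatrix_id_id]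
    rw [transpose_submatrix]
    conv_lhs => rw [hA]
    rw [submatrix_mul_equiv, submatrix_mul_equiv, h]

/-- Congruence by a permutation. -/
lemma cong_perm {n : ℕ} (A : Matrix (Fin n) (Fin n) (ZMod 2)) (σ : Equiv.Perm (Fin n)) :
    ∃ P : Matrix (Fin n) (Fin n) (ZMod 2),
      IsUnit P ∧ P * A * Pᵀ = A.submatrix σ σ := by
  refine ⟨(1 : Matrix (Fin n) (Fin n) (ZMod 2)).submatrix σ ⇑(Equiv.refl (Fin n)), ?_, ?_⟩
  · rw [Matrix.isUnit_iff_isUnit_det]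
    apply IsUnit.of_mul_eq_one ((1 : Matrix (Fin n) (Fin n) (ZMod 2)).submatrix
      ⇑(Equiv.refl (Fin n)) σ).det
    rw [← det_mul, submatrix_mul_equiv, one_mul, submatrix_one_equiv, det_one]
  · have hA : A = A.submatrix ⇑(Equiv.refl (Fin n)) ⇑(Equiv.refl (Fin n)) := by
      simp
    rw [transpose_submatrix, transpose_one]
    conv_lhs => rw [hA]
    rw [submatrix_mul_equiv, submatrix_mul_equiv, one_mul, mul_one]

/-- Block elimination step. -/
lemma elim_block {a b : Type*} [Fintype a] [Fintype b] [DecidableEq a] [DecidableEq b]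
    (A₁₁ : Matrix a a (ZMod 2)) (A₁₂ : Matrix a b (ZMod 2))
    (A₂₁ : Matrix b a (ZMod 2)) (A₂₂ : Matrix b b (ZMod 2))
    (h11 : A₁₁ * A₁₁ = 1) (h11s : A₁₁ᵀ = A₁₁) (hs : A₂₁ᵀ = A₁₂) :
    (fromBlocks 1 0 (A₂₁ * A₁₁) 1) * (fromBlocks A₁₁ A₁₂ A₂₁ A₂₂) *
      (fromBlocks 1 0 (A₂₁ * A₁₁) 1)ᵀ
      = fromBlocks A₁₁ 0 0 (A₂₁ * A₁₁ * A₁₂ + A₂₂) := by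
  have hC : A₂₁ * A₁₁ * A₁₁ = A₂₁ := by rw [Matrix.mul_assoc, h11, Matrix.mul_one]
  have h1 : (fromBlocks 1 0 (A₂₁ * A₁₁) 1 : Matrix (a ⊕ b) (a ⊕ b) (ZMod 2))
      * fromBlocks A₁₁ A₁₂ A₂₁ A₂₂
      = fromBlocks A₁₁ A₁₂ 0 (A₂₁ * A₁₁ * A₁₂ + A₂₂) := by
    rw [fromBlocks_multiply]
    simp only [Matrix.one_mul, Matrix.zero_mul, add_zero, zero_add, hC, mat_add_self]
  have hCT : A₁₁ * (A₂₁ * A₁₁)ᵀ = A₁₂ := by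
    rw [transpose_mul, h11s, hs, ← Matrix.mul_assoc, h11, Matrix.one_mul]
  have h2 : (fromBlocks A₁₁ A₁₂ 0 (A₂₁ * A₁₁ * A₁₂ + A₂₂) : Matrix (a ⊕ b) (a ⊕ b) (ZMod 2))
      * (fromBlocks 1 0 (A₂₁ * A₁₁) 1)ᵀ
      = fromBlocks A₁₁ 0 0 (A₂₁ * A₁₁ * A₁₂ + A₂₂) := by
    rw [fromBlocks_transpose, transpose_one, transpose_one, transpose_zero, fromBlocks_multiply]
    simp only [Matrix.mul_one, Matrix.mul_zero, Matrix.zero_mul, add_zero, zero_add, hCT,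
      mat_add_self]
  rw [h1, h2]

def J2 : Matrix (Fin 2) (Fin 2) (ZMod 2) := !![0,1;1,0]

-- reindexing of the canonical form, 1-block case
lemma canon_b1 (l k m : ℕ) :
    (canon (l+1) (k+1) m).submatrix (e1 l) (e1 l)
      = fromBlocks (1 : Matrix (Fin 1) (Fin 1) (ZMod 2)) 0 0 (canon l k m) := by
  ext x y
  rcases x with a | i <;> rcases y with b | j
  · rw [Fin.fin_one_eq_zero a, Fin.fin_one_eq_zero b]
    simp only [submatrix_apply, fromBlocks_apply₁₁, one_apply_eq]
    rw [canon_apply]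
    rw [e1_inl_val]
    split_ifs <;> first | rfl | (exfalso; omega) | (exfalso; simp_all) | (exfalso; simp_all; omega) | (exfalso; simp_all) | (exfalso; simp_all; omega)
  · simp only [submatrix_apply, fromBlocks_apply₁₂, Matrix.zero_apply]
    rw [canon_apply]
    rw [e1_inl_val, e1_inr_val]
    split_ifs <;> first | rfl | (exfalso; omega) | (exfalso; simp_all) | (exfalso; simp_all; omega)
  · simp only [submatrix_apply, fromBlocks_apply₂₁, Matrix.zero_apply]
    rw [canon_apply]
    rw [e1_inl_val, e1_inr_val]
    split_ifs <;> first | rfl | (exfalso; omega) | (exfalso; simp_all) | (exfalso; simp_all; omega)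
  · simp only [submatrix_apply, fromBlocks_apply₂₂]
    rw [canon_apply, canon_apply]
    rw [e1_inr_val, e1_inr_val]
    split_ifs <;> first | rfl | (exfalso; omega) | (exfalso; simp_all) | (exfalso; simp_all; omega)

-- reindexing of the canonical form, 2-block case
lemma canon_b2 (l m : ℕ) :
    (canon (l+2) 0 (m+1)).submatrix (e2 l) (e2 l)
      = fromBlocks J2 0 0 (canon l 0 m) := by
  have hJ : ∀ a b : Fin 2, J2 a b
      = if a.val = b.val then 0 else 1 := by intro a b; fin_cases a <;> fin_cases b <;> rfl
  ext x y
  rcases x with a | i <;> rcases y with b | j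
  · simp only [submatrix_apply, fromBlocks_apply₁₁]
    rw [canon_apply, hJ]
    rw [e2_inl_val, e2_inl_val]
    have ha := a.isLt
    have hb := b.isLt
    split_ifs <;> first | rfl | (exfalso; omega) | (exfalso; simp_all) | (exfalso; simp_all; omega)
  · simp only [submatrix_apply, fromBlocks_apply₁₂, Matrix.zero_apply]
    rw [canon_apply]
    rw [e2_inl_val, e2_inr_val]
    have ha := a.isLt
    split_ifs <;> first | rfl | (exfalso; omega) | (exfalso; simp_all) | (exfalso; simp_all; omega)
  · simp only [submatrix_apply, fromBlocks_apply₂₁, Matrix.zero_apply]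
    rw [canon_apply]
    rw [e2_inl_val, e2_inr_val]
    have hb := b.isLt
    split_ifs <;> first | rfl | (exfalso; omega) | (exfalso; simp_all) | (exfalso; simp_all; omega)
  · simp only [submatrix_apply, fromBlocks_apply₂₂]
    rw [canon_apply, canon_apply]
    rw [e2_inr_val, e2_inr_val]
    split_ifs <;> first | rfl | (exfalso; omega) | (exfalso; simp_all) | (exfalso; simp_all; omega)

-- conjugation preserves zero diagonal over ZMod 2
lemma conj_diag_zero {l : ℕ} (Q S : Matrix (Fin l) (Fin l) (ZMod 2))
    (hS : Sᵀ = S) (hd : ∀ i, S i i = 0) (i : Fin l) : (Q * S * Qᵀ) i i = 0 := by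
  have hS' : ∀ a b, S a b = S b a := fun a b => congrFun (congrFun hS b) a
  rw [mul_apply]
  have hstep : ∀ j, (Q * S) i j * Qᵀ j i = ∑ a, Q i a * S a j * Q i j := by
    intro j
    rw [mul_apply, transpose_apply, Finset.sum_mul]
  rw [Finset.sum_congr rfl (fun j _ => hstep j)]
  rw [← Finset.sum_product']
  apply Finset.sum_ninvolution (fun p => (p.2, p.1))
  · intro p
    have : Q i p.2 * S p.2 p.1 * Q i p.1 = Q i p.1 * S p.1 p.2 * Q i p.2 := by
      rw [hS' p.2 p.1]; ring
    rw [this]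
    exact CharTwo.add_self_eq_zero _
  · intro p hp h
    apply hp
    have h2 : p.2 = p.1 := congrArg Prod.fst h
    rw [h2, hd, mul_zero, zero_mul]
  · intro a; exact Finset.mem_univ _
  · intro a; rfl


lemma main : ∀ (n : ℕ) (A : Matrix (Fin n) (Fin n) (ZMod 2)), A.IsSymm →
    ∃ (k m : ℕ) (P : Matrix (Fin n) (Fin n) (ZMod 2)),
      k + 2 * m ≤ n ∧ IsUnit P ∧ P * A * Pᵀ = canon n k m := by
  intro n
  induction n using Nat.strong_induction_on with
  | h n IH =>
  intro A hsymm
  by_cases hd : ∃ i, A i i = 1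
  · -- there is a nonzero diagonal entry
    obtain ⟨i0, hi0⟩ := hd
    obtain ⟨l, rfl⟩ : ∃ l, n = l + 1 := ⟨n - 1, by have := i0.pos; omega⟩
    have hσ0 : (Equiv.swap (0 : Fin (l+1)) i0) 0 = i0 := Equiv.swap_apply_left 0 i0
    obtain ⟨Pσ, hPσu, hPσ⟩ := cong_perm A (Equiv.swap (0 : Fin (l+1)) i0)
    set σ : Equiv.Perm (Fin (l+1)) := Equiv.swap (0 : Fin (l+1)) i0 with hσdef
    have hA₂s : (A.submatrix σ σ)ᵀ = A.submatrix σ σ := hsymm.submatrix ⇑σ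
    have hA₂00 : (A.submatrix σ σ) 0 0 = 1 := by
      rw [submatrix_apply, hσ0]; exact hi0
    set M := (A.submatrix σ σ).submatrix ⇑(e1 l) ⇑(e1 l) with hMdef
    have hMs : Mᵀ = M := (Matrix.IsSymm.submatrix hA₂s ⇑(e1 l))
    have hM11 : M.toBlocks₁₁ = 1 := by
      ext i j
      rw [Fin.fin_one_eq_zero i, Fin.fin_one_eq_zero j, one_apply_eq]
      show (A.submatrix σ σ) ((e1 l) (Sum.inl 0)) ((e1 l) (Sum.inl 0)) = 1
      rw [show (e1 l) (Sum.inl 0) = 0 from rfl]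
      exact hA₂00
    have hs21 : M.toBlocks₂₁ᵀ = M.toBlocks₁₂ := by
      ext i j
      exact congrFun (congrFun hMs (Sum.inl i)) (Sum.inr j)
    have hs12 : M.toBlocks₁₂ᵀ = M.toBlocks₂₁ := by
      rw [← hs21, transpose_transpose]
    have hs22 : M.toBlocks₂₂ᵀ = M.toBlocks₂₂ := by
      ext i j
      exact congrFun (congrFun hMs (Sum.inr i)) (Sum.inr j)
    have hBsym : (M.toBlocks₂₁ * (1 : Matrix (Fin 1) (Fin 1) (ZMod 2)) * M.toBlocks₁₂ + M.toBlocks₂₂)ᵀ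
        = M.toBlocks₂₁ * (1 : Matrix (Fin 1) (Fin 1) (ZMod 2)) * M.toBlocks₁₂ + M.toBlocks₂₂ := by
      rw [transpose_add, transpose_mul, transpose_mul, transpose_one, hs12, hs21, hs22]
      simp only [Matrix.one_mul, Matrix.mul_one]
    obtain ⟨k, m, Q, hkm, hQu, hQeq⟩ := IH l (by omega) _ hBsym
    have helim : (fromBlocks 1 0 (M.toBlocks₂₁ * (1 : Matrix (Fin 1) (Fin 1) (ZMod 2))) 1) * M * (fromBlocks 1 0 (M.toBlocks₂₁ * (1 : Matrix (Fin 1) (Fin 1) (ZMod 2))) 1)ᵀ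
        = fromBlocks 1 0 0 (M.toBlocks₂₁ * (1 : Matrix (Fin 1) (Fin 1) (ZMod 2)) * M.toBlocks₁₂ + M.toBlocks₂₂) := by
      conv_lhs => rw [show M = fromBlocks M.toBlocks₁₁ M.toBlocks₁₂ M.toBlocks₂₁ M.toBlocks₂₂
        from (fromBlocks_toBlocks M).symm, hM11]
      exact elim_block 1 _ _ _ (Matrix.one_mul 1) transpose_one hs21
    have hP₁u : IsUnit (fromBlocks 1 0 (M.toBlocks₂₁ * (1 : Matrix (Fin 1) (Fin 1) (ZMod 2))) 1 : Matrix (Fin 1 ⊕ Fin l) (Fin 1 ⊕ Fin l) (ZMod 2)) := by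
      rw [Matrix.isUnit_iff_isUnit_det, det_fromBlocks_zero₁₂, det_one, det_one, one_mul]
      exact isUnit_one
    have hP₂u : IsUnit (fromBlocks 1 0 0 Q : Matrix (Fin 1 ⊕ Fin l) (Fin 1 ⊕ Fin l) (ZMod 2)) := by
      rw [Matrix.isUnit_iff_isUnit_det, det_fromBlocks_zero₂₁, det_one, one_mul,
        ← Matrix.isUnit_iff_isUnit_det]
      exact hQu
    have hQeq' : Q * (M.toBlocks₂₁ * M.toBlocks₁₂ + M.toBlocks₂₂) * Qᵀ = canon l k m := by
      simpa only [Matrix.mul_one] using hQeq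
    have hconj2 : (fromBlocks 1 0 0 Q : Matrix (Fin 1 ⊕ Fin l) (Fin 1 ⊕ Fin l) (ZMod 2))
        * fromBlocks 1 0 0 (M.toBlocks₂₁ * (1 : Matrix (Fin 1) (Fin 1) (ZMod 2)) * M.toBlocks₁₂ + M.toBlocks₂₂)
        * (fromBlocks 1 0 0 Q : Matrix (Fin 1 ⊕ Fin l) (Fin 1 ⊕ Fin l) (ZMod 2))ᵀ
        = fromBlocks 1 0 0 (canon l k m) := by
      rw [fromBlocks_transpose, fromBlocks_multiply, fromBlocks_multiply]
      simp only [Matrix.one_mul, Matrix.mul_one, Matrix.zero_mul, Matrix.mul_zero,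
        transpose_zero, transpose_one, add_zero, zero_add, Matrix.mul_assoc]
      rw [← Matrix.mul_assoc, hQeq']
    have htot : ((fromBlocks 1 0 0 Q) * (fromBlocks 1 0 (M.toBlocks₂₁ * (1 : Matrix (Fin 1) (Fin 1) (ZMod 2))) 1)) * M
        * ((fromBlocks 1 0 0 Q) * (fromBlocks 1 0 (M.toBlocks₂₁ * (1 : Matrix (Fin 1) (Fin 1) (ZMod 2))) 1))ᵀ
        = fromBlocks 1 0 0 (canon l k m) := by
      rw [transpose_mul]
      have hassoc : (fromBlocks 1 0 0 Q) * (fromBlocks 1 0 (M.toBlocks₂₁ * (1 : Matrix (Fin 1) (Fin 1) (ZMod 2))) 1) * M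
          * ((fromBlocks 1 0 (M.toBlocks₂₁ * (1 : Matrix (Fin 1) (Fin 1) (ZMod 2))) 1)ᵀ * (fromBlocks 1 0 0 Q)ᵀ)
          = (fromBlocks 1 0 0 Q) * ((fromBlocks 1 0 (M.toBlocks₂₁ * (1 : Matrix (Fin 1) (Fin 1) (ZMod 2))) 1) * M
            * (fromBlocks 1 0 (M.toBlocks₂₁ * (1 : Matrix (Fin 1) (Fin 1) (ZMod 2))) 1)ᵀ) * (fromBlocks 1 0 0 Q)ᵀ := by
        simp only [Matrix.mul_assoc]
      rw [hassoc, helim, hconj2]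
    obtain ⟨Qf, hQfu, hQf⟩ := cong_sum (e1 l) (A.submatrix σ σ) _ _ (hP₂u.mul hP₁u) htot
    have hcanon : (fromBlocks 1 0 0 (canon l k m)).submatrix (e1 l).symm (e1 l).symm
        = canon (l+1) (k+1) m := submatrix_symm_eq _ _ _ (canon_b1 l k m)
    refine ⟨k + 1, m, Qf * Pσ, by omega, hQfu.mul hPσu, ?_⟩
    have hassoc2 : Qf * Pσ * A * (Qf * Pσ)ᵀ = Qf * (Pσ * A * Pσᵀ) * Qfᵀ := by
      rw [transpose_mul]; simp only [Matrix.mul_assoc]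
    rw [hassoc2, hPσ, hQf, hcanon]
  · -- zero diagonal
    push_neg at hd
    have hdiag : ∀ i, A i i = 0 := by
      intro i
      have h2 : ∀ x : ZMod 2, x ≠ 1 → x = 0 := by decide
      exact h2 _ (hd i)
    by_cases hz : A = 0
    · refine ⟨0, 0, 1, by omega, isUnit_one, ?_⟩
      rw [transpose_one, Matrix.mul_one, Matrix.one_mul, hz, canon_zero]
    · have hex : ∃ i j, A i j = 1 := by
        by_contra hno
        push_neg at hno
        apply hz
        ext i j
        have h2 : ∀ x : ZMod 2, x ≠ 1 → x = 0 := by decide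
        exact h2 _ (hno i j)
      obtain ⟨i0, j0, hij⟩ := hex
      have hne : i0 ≠ j0 := by
        intro h
        subst h
        exact hd i0 hij
      obtain ⟨l, rfl⟩ : ∃ l, n = l + 2 := by
        refine ⟨n - 2, ?_⟩
        rcases Nat.lt_or_ge n 2 with h | h
        · exact absurd (Fin.ext (by have := i0.isLt; have := j0.isLt; omega)) hne
        · omega
      have hj'0 : (Equiv.swap (0 : Fin (l+2)) i0) j0 ≠ 0 := by
        intro h
        have h2 := congrArg (Equiv.swap (0 : Fin (l+2)) i0) h
        rw [Equiv.swap_apply_self, Equiv.swap_apply_left] at h2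
        exact hne h2.symm
      set σ : Equiv.Perm (Fin (l+2)) :=
        (Equiv.swap (1 : Fin (l+2)) ((Equiv.swap (0 : Fin (l+2)) i0) j0)).trans
          (Equiv.swap (0 : Fin (l+2)) i0) with hσdef
      have h01 : (0 : Fin (l+2)) ≠ 1 := by
        intro h
        have := congrArg Fin.val h
        simp at this
      have hσ0 : σ 0 = i0 := by
        rw [hσdef, Equiv.trans_apply,
          Equiv.swap_apply_of_ne_of_ne h01 (Ne.symm hj'0), Equiv.swap_apply_left]
      have hσ1 : σ 1 = j0 := by
        rw [hσdef, Equiv.trans_apply, Equiv.swap_apply_left, Equiv.swap_apply_self]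
      obtain ⟨Pσ, hPσu, hPσ⟩ := cong_perm A σ
      have hA₂s : (A.submatrix σ σ)ᵀ = A.submatrix σ σ := hsymm.submatrix ⇑σ
      have hA₂d : ∀ i, (A.submatrix σ σ) i i = 0 := fun i => hdiag (σ i)
      have hA₂01 : (A.submatrix σ σ) 0 1 = 1 := by
        rw [submatrix_apply, hσ0, hσ1]; exact hij
      have hA₂10 : (A.submatrix σ σ) 1 0 = 1 := by
        rw [submatrix_apply, hσ0, hσ1]
        exact (hsymm.apply i0 j0).trans hij
      set M := (A.submatrix σ σ).submatrix ⇑(e2 l) ⇑(e2 l) with hMdef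
      have hMs : Mᵀ = M := (Matrix.IsSymm.submatrix hA₂s ⇑(e2 l))
      have hJJ : J2 * J2 = 1 := by decide
      have hJT : J2ᵀ = J2 := by decide
      have he20 : (e2 l) (Sum.inl 0) = 0 := rfl
      have he21 : (e2 l) (Sum.inl 1) = 1 := by
        apply Fin.ext
        simp [e2_inl_val]
      have hJval : ∀ a b : Fin 2, J2 a b
          = if a.val = b.val then 0 else 1 := by intro a b; fin_cases a <;> fin_cases b <;> rfl
      have hM11 : M.toBlocks₁₁ = J2 := by
        ext i j
        rw [hJval]
        show (A.submatrix σ σ) ((e2 l) (Sum.inl i)) ((e2 l) (Sum.inl j)) = _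
        by_cases h : i.val = j.val
        · have hij2 : i = j := Fin.ext h
          subst hij2
          rw [if_pos rfl]
          exact hA₂d _
        · rw [if_neg h]
          have hi2 := i.isLt
          have hj2 := j.isLt
          rcases (show i.val = 0 ∧ j.val = 1 ∨ i.val = 1 ∧ j.val = 0 by omega) with
            ⟨h1, h2⟩ | ⟨h1, h2⟩
          · rw [show (e2 l) (Sum.inl i) = 0 from Fin.ext (by simp [h1]),
              show (e2 l) (Sum.inl j) = 1 from Fin.ext (by simp [h2])]
            exact hA₂01
          · rw [show (e2 l) (Sum.inl i) = 1 from Fin.ext (by simp [h1]),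
              show (e2 l) (Sum.inl j) = 0 from Fin.ext (by simp [h2])]
            exact hA₂10
      have hs21 : M.toBlocks₂₁ᵀ = M.toBlocks₁₂ := by
        ext i j
        exact congrFun (congrFun hMs (Sum.inl i)) (Sum.inr j)
      have hs12 : M.toBlocks₁₂ᵀ = M.toBlocks₂₁ := by
        rw [← hs21, transpose_transpose]
      have hs22 : M.toBlocks₂₂ᵀ = M.toBlocks₂₂ := by
        ext i j
        exact congrFun (congrFun hMs (Sum.inr i)) (Sum.inr j)
      have hBsym : (M.toBlocks₂₁ * J2 * M.toBlocks₁₂ + M.toBlocks₂₂)ᵀ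
          = M.toBlocks₂₁ * J2 * M.toBlocks₁₂ + M.toBlocks₂₂ := by
        rw [transpose_add, transpose_mul, transpose_mul, hJT, hs12, hs21, hs22,
          Matrix.mul_assoc]
      have hBd : ∀ i, (M.toBlocks₂₁ * J2 * M.toBlocks₁₂ + M.toBlocks₂₂) i i = 0 := by
        intro i
        have h1x : M.toBlocks₁₂ 0 i = M.toBlocks₂₁ i 0 := (congrFun (congrFun hs21 0) i).symm
        have h2x : M.toBlocks₁₂ 1 i = M.toBlocks₂₁ i 1 := (congrFun (congrFun hs21 1) i).symm
        have h22 : M.toBlocks₂₂ i i = 0 := hA₂d _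
        rw [Matrix.add_apply, h22, add_zero]
        simp only [mul_apply, Fin.sum_univ_two]
        rw [h1x, h2x]
        have hcalc : ∀ x y : ZMod 2,
            (x * J2 0 0
              + y * J2 1 0) * x
            + (x * J2 0 1
              + y * J2 1 1) * y = 0 := by decide
        exact hcalc _ _
      obtain ⟨k, m, Q, hkm, hQu, hQeq⟩ := IH l (by omega) _ hBsym
      have hdcanon : ∀ i : Fin l, canon l k m i i = 0 := by
        intro i
        rw [← hQeq]
        exact conj_diag_zero Q _ hBsym hBd i
      have hk0 : k = 0 := by
        by_contra hk
        have hl : 0 < l := by omega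
        have h := hdcanon ⟨0, hl⟩
        rw [canon_apply, if_pos ⟨rfl, Nat.pos_of_ne_zero hk⟩] at h
        exact one_ne_zero h
      subst hk0
      have helim : (fromBlocks 1 0 (M.toBlocks₂₁ * J2) 1) * M
          * (fromBlocks 1 0 (M.toBlocks₂₁ * J2) 1)ᵀ
          = fromBlocks J2 0 0
            (M.toBlocks₂₁ * J2 * M.toBlocks₁₂ + M.toBlocks₂₂) := by
        conv_lhs => rw [show M = fromBlocks M.toBlocks₁₁ M.toBlocks₁₂ M.toBlocks₂₁ M.toBlocks₂₂
          from (fromBlocks_toBlocks M).symm, hM11]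
        exact elim_block _ _ _ _ hJJ hJT hs21
      have hP₁u : IsUnit (fromBlocks 1 0 (M.toBlocks₂₁ * J2) 1 :
          Matrix (Fin 2 ⊕ Fin l) (Fin 2 ⊕ Fin l) (ZMod 2)) := by
        rw [Matrix.isUnit_iff_isUnit_det, det_fromBlocks_zero₁₂, det_one, det_one, one_mul]
        exact isUnit_one
      have hP₂u : IsUnit (fromBlocks 1 0 0 Q : Matrix (Fin 2 ⊕ Fin l) (Fin 2 ⊕ Fin l) (ZMod 2)) := by
        rw [Matrix.isUnit_iff_isUnit_det, det_fromBlocks_zero₂₁, det_one, one_mul,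
          ← Matrix.isUnit_iff_isUnit_det]
        exact hQu
      have hconj2 : (fromBlocks 1 0 0 Q : Matrix (Fin 2 ⊕ Fin l) (Fin 2 ⊕ Fin l) (ZMod 2))
          * fromBlocks J2 0 0 (M.toBlocks₂₁ * J2 * M.toBlocks₁₂ + M.toBlocks₂₂)
          * (fromBlocks 1 0 0 Q : Matrix (Fin 2 ⊕ Fin l) (Fin 2 ⊕ Fin l) (ZMod 2))ᵀ
          = fromBlocks J2 0 0 (canon l 0 m) := by
        have hQeq' : Q * (M.toBlocks₂₁ * (J2 * M.toBlocks₁₂) + M.toBlocks₂₂) * Qᵀ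
            = canon l 0 m := by
          simpa only [Matrix.mul_assoc] using hQeq
        rw [fromBlocks_transpose, fromBlocks_multiply, fromBlocks_multiply]
        simp only [Matrix.one_mul, Matrix.mul_one, Matrix.zero_mul, Matrix.mul_zero,
          transpose_zero, transpose_one, add_zero, zero_add, Matrix.mul_assoc]
        rw [← Matrix.mul_assoc, hQeq']
      have htot : ((fromBlocks 1 0 0 Q) * (fromBlocks 1 0 (M.toBlocks₂₁ * J2) 1)) * M
          * ((fromBlocks 1 0 0 Q) * (fromBlocks 1 0 (M.toBlocks₂₁ * J2) 1))ᵀ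
          = fromBlocks J2 0 0 (canon l 0 m) := by
        rw [transpose_mul]
        have hassoc : (fromBlocks 1 0 0 Q) * (fromBlocks 1 0 (M.toBlocks₂₁ * J2) 1) * M
            * ((fromBlocks 1 0 (M.toBlocks₂₁ * J2) 1)ᵀ * (fromBlocks 1 0 0 Q)ᵀ)
            = (fromBlocks 1 0 0 Q) * ((fromBlocks 1 0 (M.toBlocks₂₁ * J2) 1) * M
              * (fromBlocks 1 0 (M.toBlocks₂₁ * J2) 1)ᵀ) * (fromBlocks 1 0 0 Q)ᵀ := by
          simp only [Matrix.mul_assoc]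
        rw [hassoc, helim, hconj2]
      obtain ⟨Qf, hQfu, hQf⟩ := cong_sum (e2 l) (A.submatrix σ σ) _ _ (hP₂u.mul hP₁u) htot
      have hcanon : (fromBlocks J2 0 0 (canon l 0 m)).submatrix (e2 l).symm (e2 l).symm
          = canon (l+2) 0 (m+1) := submatrix_symm_eq _ _ _ (canon_b2 l m)
      refine ⟨0, m + 1, Qf * Pσ, by omega, hQfu.mul hPσu, ?_⟩
      have hassoc2 : Qf * Pσ * A * (Qf * Pσ)ᵀ = Qf * (Pσ * A * Pσᵀ) * Qfᵀ := by
        rw [transpose_mul]; simp only [Matrix.mul_assoc]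
      rw [hassoc2, hPσ, hQf, hcanon]

end Stmt9Aux

/-- Every symmetric matrix over `ℤ₂` is congruent to a block diagonal matrix
`diag(I_k, G_m, 0)` where `I_k` is a `k × k` identity block and `G_m` is a
direct sum of `m` copies of `[[0,1],[1,0]]`, followed by a zero block. -/
theorem stmt_9 (n : ℕ) (A : Matrix (Fin n) (Fin n) (ZMod 2)) (hsymm : A.IsSymm) :
    ∃ (k m : ℕ) (P : Matrix (Fin n) (Fin n) (ZMod 2)),
      k + 2 * m ≤ n ∧ IsUnit P ∧
      P * A * Pᵀ = Matrix.of (fun i j : Fin n =>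
        if i = j ∧ i.val < k then 1
        else if k ≤ i.val ∧ i.val < k + 2 * m ∧ k ≤ j.val ∧ j.val < k + 2 * m ∧
            (i.val - k) / 2 = (j.val - k) / 2 ∧ i ≠ j then 1
        else 0) := by
  exact Stmt9Aux.main n A hsymm
end
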